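/- Let F̄ ∈ RV_{−α} with α > 0 and let τ be a continuously differentiable tail order function on [0,∞)^2 whose partial derivative τ_v(u,v) is nondecreasing in u. For 0 < δ < 1/2 define D(δ,t) = ∫_δ^{1/2} (τ_v((1−y)^{−α}, y^{−α}) − τ_v(1, y^{−α})) dF(ty). If the Lebesgue measure of { y ∈ [δ, 1/2] : τ_v((1−y)^{−α}, y^{−α}) > τ_v(1, y^{−α}) } is positive, then lim_{t→∞} D(δ,t)/F̄(t) = α ∫_δ^{1/2} (τ_v((1−y)^{−α}, y^{−α}) − τ_v(1, y^{−α})) y^{−α−1} dy, and this limit is strictly positive and finite. -/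

import Mathlib

open Filter Set MeasureTheory
open scoped Topology

lemma aux_sum_integral (μ : Measure ℝ) (f : ℝ → ℝ) (z : ℕ → ℝ) (hz : Monotone z) :
    ∀ n : ℕ, IntegrableOn f (Ioc (z 0) (z n)) μ →
    ∫ x in Ioc (z 0) (z n), f x ∂μ
      = ∑ i ∈ Finset.range n, ∫ x in Ioc (z i) (z (i+1)), f x ∂μ := by
  intro n
  induction n with
  | zero => intro _; simp
  | succ n ih =>
    intro hint
    have h01 : z 0 ≤ z n := hz (Nat.zero_le n)
    have h12 : z n ≤ z (n+1) := hz (Nat.le_succ n)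
    have hU : Ioc (z 0) (z n) ∪ Ioc (z n) (z (n+1)) = Ioc (z 0) (z (n+1)) :=
      Ioc_union_Ioc_eq_Ioc h01 h12
    have h1 : IntegrableOn f (Ioc (z 0) (z n)) μ :=
      hint.mono_set (Ioc_subset_Ioc le_rfl h12)
    have h2 : IntegrableOn f (Ioc (z n) (z (n+1))) μ :=
      hint.mono_set (Ioc_subset_Ioc h01 le_rfl)
    rw [← hU, setIntegral_union (Ioc_disjoint_Ioc_of_le le_rfl) measurableSet_Ioc h1 h2,
      Finset.sum_range_succ, ih h1]

set_option maxHeartbeats 2000000 in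
theorem D_delta_t_asymptotics
    (F : StieltjesFunction ℝ) (α : ℝ) (hα : 0 < α)
    (hF0 : ∀ x : ℝ, x < 0 → F x = 0)
    (hFtop : Tendsto (fun t => F t) atTop (𝓝 1))
    (hFcont : Continuous fun t => F t)
    (hFbar_pos : ∀ t : ℝ, F t < 1)
    (hRV : ∀ x : ℝ, 0 < x →
      Tendsto (fun t => (1 - F (x * t)) / (1 - F t)) atTop (𝓝 (x ^ (-α))))
    (τv : ℝ → ℝ → ℝ)
    (hτv_cont : Continuous fun p : ℝ × ℝ => τv p.1 p.2)
    (hτv_mono : ∀ v, Monotone fun u => τv u v)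
    (δ : ℝ) (hδ : 0 < δ) (hδ' : δ < 1 / 2)
    (hpos : 0 < volume {y ∈ Icc δ (1 / 2) |
      τv 1 (y ^ (-α)) < τv ((1 - y) ^ (-α)) (y ^ (-α))}) :
    Tendsto (fun t =>
        (∫ x in Ioc (δ * t) (t / 2),
          (τv ((1 - x / t) ^ (-α)) ((x / t) ^ (-α)) - τv 1 ((x / t) ^ (-α)))
            ∂F.measure) / (1 - F t))
      atTop
      (𝓝 (α * ∫ y in Ioc δ (1 / 2),
        (τv ((1 - y) ^ (-α)) (y ^ (-α)) - τv 1 (y ^ (-α))) * y ^ (-α - 1))) ∧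
    0 < α * ∫ y in Ioc δ (1 / 2),
        (τv ((1 - y) ^ (-α)) (y ^ (-α)) - τv 1 (y ^ (-α))) * y ^ (-α - 1) ∧
    IntegrableOn
      (fun y => (τv ((1 - y) ^ (-α)) (y ^ (-α)) - τv 1 (y ^ (-α))) * y ^ (-α - 1))
      (Ioc δ (1 / 2)) := by
  have hδhalf : δ ≤ 1 / 2 := le_of_lt hδ'
  set g : ℝ → ℝ := fun y => τv ((1 - y) ^ (-α)) (y ^ (-α)) - τv 1 (y ^ (-α)) with hgdef
  have hB : ∀ t : ℝ, 0 < 1 - F t := fun t => by linarith [hFbar_pos t]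
  -- continuity of g on Icc δ (1/2)
  have h1c : ContinuousOn (fun y : ℝ => (1 - y) ^ (-α)) (Icc δ (1/2)) := by
    refine (continuousOn_const.sub continuousOn_id).rpow_const fun x hx => Or.inl ?_
    have := hx.2; intro h; simp only [Pi.sub_apply, id] at h; linarith [h]
  have h2c : ContinuousOn (fun y : ℝ => y ^ (-α)) (Icc δ (1/2)) := by
    refine continuousOn_id.rpow_const fun x hx => Or.inl ?_
    have := hx.1; simp only [id]; intro h; linarith
  have hgcont : ContinuousOn g (Icc δ (1/2)) := by
    have hA : ContinuousOn (fun y : ℝ => τv ((1 - y) ^ (-α)) (y ^ (-α))) (Icc δ (1/2)) :=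
      hτv_cont.comp_continuousOn (h1c.prodMk h2c)
    have hBc : ContinuousOn (fun y : ℝ => τv 1 (y ^ (-α))) (Icc δ (1/2)) :=
      hτv_cont.comp_continuousOn (continuousOn_const.prodMk h2c)
    exact hA.sub hBc
  -- nonnegativity of g
  have hgnn : ∀ y ∈ Icc δ (1/2), 0 ≤ g y := by
    intro y hy
    have hy0 : 0 < y := lt_of_lt_of_le hδ hy.1
    have h1y : 0 < 1 - y := by linarith [hy.2]
    have h1y1 : 1 - y ≤ 1 := by linarith
    have hone : (1:ℝ) ≤ (1 - y) ^ (-α) :=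
      Real.one_le_rpow_of_pos_of_le_one_of_nonpos h1y h1y1 (by linarith)
    exact sub_nonneg.mpr (hτv_mono (y ^ (-α)) hone)
  -- integrability of g y * y^(-α-1)
  have hρcont : ContinuousOn (fun y : ℝ => y ^ (-α - 1)) (Icc δ (1/2)) := by
    refine continuousOn_id.rpow_const fun x hx => Or.inl ?_
    have := hx.1; simp only [id]; intro h; linarith
  have hint3 : IntegrableOn (fun y => g y * y ^ (-α - 1)) (Ioc δ (1/2)) volume :=
    ((hgcont.mul hρcont).integrableOn_Icc).mono_set Ioc_subset_Icc_self
  -- positivity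
  have hkey : 0 < ∫ y in Ioc δ (1/2), g y * y ^ (-α - 1) := by
    rw [setIntegral_pos_iff_support_of_nonneg_ae ?_ hint3]
    · refine lt_of_lt_of_le hpos ?_
      have hsub : {y ∈ Icc δ (1 / 2) |
          τv 1 (y ^ (-α)) < τv ((1 - y) ^ (-α)) (y ^ (-α))} ⊆
          ((Function.support fun y => g y * y ^ (-α - 1)) ∩ Ioc δ (1/2)) ∪ {δ} := by
        intro y hy
        obtain ⟨hyI, hylt⟩ := hy
        have hy0 : 0 < y := lt_of_lt_of_le hδ hyI.1
        have hsupp : y ∈ Function.support fun y => g y * y ^ (-α - 1) := by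
          have : 0 < g y * y ^ (-α - 1) :=
            mul_pos (sub_pos.mpr hylt) (Real.rpow_pos_of_pos hy0 _)
          exact ne_of_gt this
        rcases eq_or_lt_of_le hyI.1 with h | h
        · exact Or.inr (by simp [← h])
        · exact Or.inl ⟨hsupp, h, hyI.2⟩
      calc volume {y ∈ Icc δ (1 / 2) |
              τv 1 (y ^ (-α)) < τv ((1 - y) ^ (-α)) (y ^ (-α))}
          ≤ volume (((Function.support fun y => g y * y ^ (-α - 1)) ∩ Ioc δ (1/2)) ∪ {δ}) :=
            measure_mono hsub
        _ ≤ volume ((Function.support fun y => g y * y ^ (-α - 1)) ∩ Ioc δ (1/2))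
              + volume ({δ} : Set ℝ) := measure_union_le _ _
        _ = volume ((Function.support fun y => g y * y ^ (-α - 1)) ∩ Ioc δ (1/2)) := by simp
    · refine (ae_restrict_iff' measurableSet_Ioc).mpr (ae_of_all _ fun y hy => ?_)
      exact mul_nonneg (hgnn y (Ioc_subset_Icc_self hy))
        (Real.rpow_nonneg (le_of_lt (lt_of_lt_of_le hδ (le_of_lt hy.1))) _)
  -- Lemma A: ratio limits
  have lemA : ∀ a b : ℝ, 0 < a → 0 < b →
      Tendsto (fun t => (F (b * t) - F (a * t)) / (1 - F t)) atTop
        (𝓝 (a ^ (-α) - b ^ (-α))) := by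
    intro a b ha hb
    refine ((hRV a ha).sub (hRV b hb)).congr fun t => ?_
    rw [div_sub_div_same]
    congr 1
    ring
  -- Lemma B: power integral
  have lemB : ∀ a b : ℝ, 0 < a → a ≤ b →
      ∫ s in Ioc a b, s ^ (-α - 1) = (a ^ (-α) - b ^ (-α)) / α := by
    intro a b ha hab
    rw [← intervalIntegral.integral_of_le hab,
      integral_rpow (Or.inr ⟨by intro h; apply absurd (by linarith : α = 0) (ne_of_gt hα),
        by rw [uIcc_of_le hab]; intro h; linarith [h.1]⟩)]
    rw [show -α - 1 + 1 = -α by ring]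
    rw [div_eq_div_iff (by intro h; apply absurd (by linarith : α = 0) (ne_of_gt hα)) (ne_of_gt hα)]
    ring
  refine ⟨?_, mul_pos hα hkey, hint3⟩
  show Tendsto (fun t => (∫ x in Ioc (δ * t) (t / 2), g (x / t) ∂F.measure) / (1 - F t))
    atTop (𝓝 (α * ∫ y in Ioc δ (1 / 2), g y * y ^ (-α - 1)))
  set T := α * ∫ y in Ioc δ (1 / 2), g y * y ^ (-α - 1) with hT
  rw [Metric.tendsto_nhds]
  intro ε' hε'
  set C := δ ^ (-α) with hC
  have hCpos : 0 < C := Real.rpow_pos_of_pos hδ _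
  set ε := ε' / (4 * (2 * C + 1)) with hε
  have hεpos : 0 < ε := by positivity
  have hεe : ε * (2 * C + 1) = ε' / 4 := by
    rw [hε]; field_simp
  -- uniform continuity of g and the partition
  have hUC := Metric.uniformContinuousOn_iff.mp
    (isCompact_Icc.uniformContinuousOn_of_continuous hgcont) ε hεpos
  obtain ⟨η, hη, hUC⟩ := hUC
  obtain ⟨n, hn⟩ := exists_nat_gt ((1 / 2 - δ) / η)
  have hn0 : 0 < (n : ℝ) := lt_trans (div_pos (by linarith) hη) hn
  set c := (1 / 2 - δ) / n with hc
  have hcpos : 0 < c := div_pos (by linarith) hn0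
  have hcη : c < η := by
    rw [hc, div_lt_iff₀ hn0]
    have := (div_lt_iff₀ hη).mp hn
    linarith [this]
  set z : ℕ → ℝ := fun i => δ + i * c with hzdef
  have hz0 : z 0 = δ := by simp [hzdef]
  have hzn : z n = 1 / 2 := by
    have hn0' : (n : ℝ) ≠ 0 := ne_of_gt hn0
    simp only [hzdef, hc]
    field_simp
    ring
  have hzmono : Monotone z := by
    intro i j hij
    simp only [hzdef]
    have : (i : ℝ) ≤ j := Nat.cast_le.mpr hij
    nlinarith
  have hzIcc : ∀ i, i ≤ n → z i ∈ Icc δ (1 / 2) := by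
    intro i hi
    refine ⟨?_, ?_⟩
    · have h0 : 0 ≤ (i : ℝ) * c := mul_nonneg (Nat.cast_nonneg i) hcpos.le
      simp only [hzdef]; linarith
    · rw [← hzn]; exact hzmono hi
  have hzstep : ∀ i : ℕ, z (i + 1) - z i = c := by
    intro i
    simp only [hzdef]
    push_cast
    ring
  have hzpos : ∀ i, i ≤ n → 0 < z i := fun i hi => lt_of_lt_of_le hδ (hzIcc i hi).1
  -- piecewise oscillation bound
  have hgbd : ∀ i, i < n → ∀ x ∈ Icc (z i) (z (i + 1)), |g x - g (z (i + 1))| ≤ ε := by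
    intro i hi x hx
    have hi1 : i + 1 ≤ n := hi
    have hxI : x ∈ Icc δ (1 / 2) :=
      ⟨le_trans (hzIcc i (le_of_lt hi)).1 hx.1, le_trans hx.2 (hzIcc (i + 1) hi1).2⟩
    have h2 : z (i + 1) ∈ Icc δ (1 / 2) := hzIcc (i + 1) hi1
    have hd : dist x (z (i + 1)) < η := by
      rw [Real.dist_eq, abs_of_nonpos (by linarith [hx.2])]
      have := hzstep i
      linarith [hx.1]
    exact le_of_lt (by simpa [Real.dist_eq] using hUC x hxI _ h2 hd)
  set L := ∑ i ∈ Finset.range n, g (z (i + 1)) * (z i ^ (-α) - z (i + 1) ^ (-α)) with hL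
  -- Step 2: step sums converge to L
  have hS : Tendsto (fun t => (∑ i ∈ Finset.range n,
      g (z (i + 1)) * (F (z (i + 1) * t) - F (z i * t))) / (1 - F t)) atTop (𝓝 L) := by
    have htend : Tendsto (fun t => ∑ i ∈ Finset.range n,
        g (z (i + 1)) * ((F (z (i + 1) * t) - F (z i * t)) / (1 - F t))) atTop (𝓝 L) := by
      refine tendsto_finset_sum _ fun i hi => ?_
      have hi' : i < n := Finset.mem_range.mp hi
      exact ((lemA (z i) (z (i + 1)) (hzpos i (le_of_lt hi')) (hzpos (i + 1) hi')).const_mul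
        (g (z (i + 1))))
    refine htend.congr fun t => ?_
    rw [Finset.sum_div]
    exact Finset.sum_congr rfl fun i _ => (mul_div_assoc _ _ _).symm
  -- Step 3: |L - T| ≤ ε * C
  have hLT : |L - T| ≤ ε * C := by
    have hTsplit : ∫ y in Ioc δ (1 / 2), g y * y ^ (-α - 1)
        = ∑ i ∈ Finset.range n, ∫ y in Ioc (z i) (z (i + 1)), g y * y ^ (-α - 1) := by
      have h := aux_sum_integral volume (fun y => g y * y ^ (-α - 1)) z hzmono n
        (by rw [hz0, hzn]; exact hint3)
      rw [hz0, hzn] at h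
      exact h
    have hterm : ∀ i ∈ Finset.range n,
        |g (z (i + 1)) * (z i ^ (-α) - z (i + 1) ^ (-α))
          - α * ∫ y in Ioc (z i) (z (i + 1)), g y * y ^ (-α - 1)|
        ≤ ε * (z i ^ (-α) - z (i + 1) ^ (-α)) := by
      intro i hi
      have hi' : i < n := Finset.mem_range.mp hi
      have hzi : 0 < z i := hzpos i (le_of_lt hi')
      have hle : z i ≤ z (i + 1) := hzmono (Nat.le_succ i)
      have hsubI : Ioc (z i) (z (i + 1)) ⊆ Ioc δ (1 / 2) :=
        Ioc_subset_Ioc (hzIcc i (le_of_lt hi')).1 (hzIcc (i + 1) hi').2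
      have hsubIcc : Ioc (z i) (z (i + 1)) ⊆ Icc δ (1 / 2) :=
        subset_trans hsubI Ioc_subset_Icc_self
      have hIρ : IntegrableOn (fun y : ℝ => y ^ (-α - 1)) (Ioc (z i) (z (i + 1))) volume :=
        (hρcont.integrableOn_Icc.mono_set (Icc_subset_Icc (hzIcc i (le_of_lt hi')).1
          (hzIcc (i + 1) hi').2)).mono_set Ioc_subset_Icc_self
      have hIg : IntegrableOn (fun y => g y * y ^ (-α - 1)) (Ioc (z i) (z (i + 1))) volume :=
        hint3.mono_set hsubI
      have hIf : IntegrableOn (fun y => (g (z (i + 1)) - g y) * y ^ (-α - 1))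
          (Ioc (z i) (z (i + 1))) volume := by
        have h := (hIρ.const_mul (g (z (i + 1)))).sub hIg
        exact h.congr (ae_of_all _ fun y => by simp only [Pi.sub_apply]; ring)
      have hρval : ∫ y in Ioc (z i) (z (i + 1)), y ^ (-α - 1)
          = (z i ^ (-α) - z (i + 1) ^ (-α)) / α := lemB (z i) (z (i + 1)) hzi hle
      have heq : g (z (i + 1)) * (z i ^ (-α) - z (i + 1) ^ (-α))
          - α * ∫ y in Ioc (z i) (z (i + 1)), g y * y ^ (-α - 1)
          = α * ∫ y in Ioc (z i) (z (i + 1)), (g (z (i + 1)) - g y) * y ^ (-α - 1) := by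
        have hsplit2 : ∫ y in Ioc (z i) (z (i + 1)), (g (z (i + 1)) - g y) * y ^ (-α - 1)
            = g (z (i + 1)) * ((z i ^ (-α) - z (i + 1) ^ (-α)) / α)
              - ∫ y in Ioc (z i) (z (i + 1)), g y * y ^ (-α - 1) := by
          rw [← hρval, ← MeasureTheory.integral_const_mul, ← integral_sub
            (hIρ.const_mul (g (z (i + 1)))) hIg]
          exact integral_congr_ae (ae_of_all _ fun y => by ring)
        rw [hsplit2]
        have hαne : α ≠ 0 := ne_of_gt hα
        field_simp
      rw [heq, abs_mul, abs_of_pos hα]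
      have hbnd : ‖∫ y in Ioc (z i) (z (i + 1)), (g (z (i + 1)) - g y) * y ^ (-α - 1)‖
          ≤ ∫ y in Ioc (z i) (z (i + 1)), ε * y ^ (-α - 1) := by
        refine norm_integral_le_of_norm_le (hIρ.const_mul ε) ?_
        refine (ae_restrict_iff' measurableSet_Ioc).mpr (ae_of_all _ fun y hy => ?_)
        have hy0 : 0 < y := lt_trans hzi hy.1
        have hρnn : 0 ≤ y ^ (-α - 1) := Real.rpow_nonneg hy0.le _
        rw [Real.norm_eq_abs, abs_mul, abs_of_nonneg hρnn]
        refine mul_le_mul_of_nonneg_right ?_ hρnn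
        rw [abs_sub_comm]
        exact hgbd i hi' y (Ioc_subset_Icc_self hy)
      rw [Real.norm_eq_abs] at hbnd
      have : ∫ y in Ioc (z i) (z (i + 1)), ε * y ^ (-α - 1)
          = ε * ((z i ^ (-α) - z (i + 1) ^ (-α)) / α) := by
        rw [MeasureTheory.integral_const_mul, hρval]
      rw [this] at hbnd
      calc α * |∫ y in Ioc (z i) (z (i + 1)), (g (z (i + 1)) - g y) * y ^ (-α - 1)|
          ≤ α * (ε * ((z i ^ (-α) - z (i + 1) ^ (-α)) / α)) :=
            mul_le_mul_of_nonneg_left hbnd hα.le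
        _ = ε * (z i ^ (-α) - z (i + 1) ^ (-α)) := by field_simp
    calc |L - T|
        = |∑ i ∈ Finset.range n, (g (z (i + 1)) * (z i ^ (-α) - z (i + 1) ^ (-α))
            - α * ∫ y in Ioc (z i) (z (i + 1)), g y * y ^ (-α - 1))| := by
          rw [hL, hT, hTsplit, Finset.mul_sum, Finset.sum_sub_distrib]
      _ ≤ ∑ i ∈ Finset.range n, |g (z (i + 1)) * (z i ^ (-α) - z (i + 1) ^ (-α))
            - α * ∫ y in Ioc (z i) (z (i + 1)), g y * y ^ (-α - 1)| :=
          Finset.abs_sum_le_sum_abs _ _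
      _ ≤ ∑ i ∈ Finset.range n, ε * (z i ^ (-α) - z (i + 1) ^ (-α)) :=
          Finset.sum_le_sum hterm
      _ = ε * (z 0 ^ (-α) - z n ^ (-α)) := by
          rw [← Finset.mul_sum, Finset.sum_range_sub' (fun i => z i ^ (-α))]
      _ ≤ ε * C := by
          rw [hz0, hzn, hC]
          have h2 : (0:ℝ) < (1 / 2 : ℝ) ^ (-α) := Real.rpow_pos_of_pos (by norm_num) _
          nlinarith
  -- Step 1: eventual comparison of the integral with the step sums
  have hstep1 : ∀ t : ℝ, 1 ≤ t →
      |(∫ x in Ioc (δ * t) (t / 2), g (x / t) ∂F.measure)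
        - ∑ i ∈ Finset.range n, g (z (i + 1)) * (F (z (i + 1) * t) - F (z i * t))|
      ≤ ε * (F (t / 2) - F (δ * t)) := by
    intro t ht
    have ht0 : (0:ℝ) < t := by linarith
    have hztmono : Monotone fun i => z i * t :=
      fun i j hij => mul_le_mul_of_nonneg_right (hzmono hij) ht0.le
    have hmaps : MapsTo (fun x => x / t) (Icc (δ * t) (t / 2)) (Icc δ (1 / 2)) := by
      intro x hx
      constructor
      · rw [le_div_iff₀ ht0]; linarith [hx.1]
      · rw [div_le_iff₀ ht0]; linarith [hx.2]
    have hImap : ContinuousOn (fun x => g (x / t)) (Icc (δ * t) (t / 2)) :=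
      hgcont.comp (continuousOn_id.div_const t) hmaps
    have hIOn : IntegrableOn (fun x => g (x / t)) (Ioc (δ * t) (t / 2)) F.measure :=
      hImap.integrableOn_Icc.mono_set Ioc_subset_Icc_self
    have hzt0 : z 0 * t = δ * t := by rw [hz0]
    have hztn : z n * t = t / 2 := by rw [hzn]; ring
    have hsplit := aux_sum_integral F.measure (fun x => g (x / t)) (fun i => z i * t)
      hztmono n (by simp only [hzt0, hztn]; exact hIOn)
    simp only [hzt0, hztn] at hsplit
    rw [hsplit, ← Finset.sum_sub_distrib]
    refine le_trans (Finset.abs_sum_le_sum_abs _ _) ?_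
    have hterm : ∀ i ∈ Finset.range n,
        |(∫ x in Ioc (z i * t) (z (i + 1) * t), g (x / t) ∂F.measure)
          - g (z (i + 1)) * (F (z (i + 1) * t) - F (z i * t))|
        ≤ ε * (F (z (i + 1) * t) - F (z i * t)) := by
      intro i hi
      have hi' : i < n := Finset.mem_range.mp hi
      have hle : z i * t ≤ z (i + 1) * t := hztmono (Nat.le_succ i)
      have hFle : F (z i * t) ≤ F (z (i + 1) * t) := F.mono hle
      have hμ : F.measure (Ioc (z i * t) (z (i + 1) * t))
          = ENNReal.ofReal (F (z (i + 1) * t) - F (z i * t)) := F.measure_Ioc _ _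
      have hsubIcc : Ioc (z i * t) (z (i + 1) * t) ⊆ Icc (δ * t) (t / 2) := by
        refine subset_trans (Ioc_subset_Icc_self) (Icc_subset_Icc ?_ ?_)
        · exact mul_le_mul_of_nonneg_right (hzIcc i (le_of_lt hi')).1 ht0.le
        · rw [← hztn]; exact mul_le_mul_of_nonneg_right (hzmono hi') ht0.le
      have hIOn' : IntegrableOn (fun x => g (x / t)) (Ioc (z i * t) (z (i + 1) * t)) F.measure :=
        hImap.integrableOn_Icc.mono_set hsubIcc
      have hμfin : F.measure (Ioc (z i * t) (z (i + 1) * t)) < ⊤ := by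
        rw [hμ]; exact ENNReal.ofReal_lt_top
      have hconst : ∫ _x in Ioc (z i * t) (z (i + 1) * t), g (z (i + 1)) ∂F.measure
          = g (z (i + 1)) * (F (z (i + 1) * t) - F (z i * t)) := by
        rw [setIntegral_const, measureReal_def, hμ, ENNReal.toReal_ofReal (by linarith), smul_eq_mul, mul_comm]
      rw [← hconst, ← integral_sub hIOn'
        (integrableOn_const hμfin.ne)]
      have hbd : ∀ x ∈ Ioc (z i * t) (z (i + 1) * t), ‖g (x / t) - g (z (i + 1))‖ ≤ ε := by
        intro x hx
        have hx' : x / t ∈ Icc (z i) (z (i + 1)) := by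
          constructor
          · rw [le_div_iff₀ ht0]; linarith [hx.1]
          · rw [div_le_iff₀ ht0]; linarith [hx.2]
        simpa [Real.norm_eq_abs] using hgbd i hi' (x / t) hx'
      have := norm_setIntegral_le_of_norm_le_const hμfin hbd
      rw [measureReal_def, hμ, ENNReal.toReal_ofReal (by linarith)] at this
      simpa [Real.norm_eq_abs] using this
    refine le_trans (Finset.sum_le_sum hterm) ?_
    rw [← Finset.mul_sum, Finset.sum_range_sub (fun i => F (z i * t)), hzt0, hztn]
  -- Final assembly
  have hratio : Tendsto (fun t => (F (t / 2) - F (δ * t)) / (1 - F t)) atTop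
      (𝓝 (δ ^ (-α) - (1 / 2 : ℝ) ^ (-α))) := by
    refine (lemA δ (1 / 2) hδ (by norm_num)).congr fun t => ?_
    rw [show (1 / 2 : ℝ) * t = t / 2 by ring]
  have hratio_ev : ∀ᶠ t in atTop, (F (t / 2) - F (δ * t)) / (1 - F t) < C + 1 := by
    refine hratio.eventually_lt_const ?_
    have h2 : (0:ℝ) < (1 / 2 : ℝ) ^ (-α) := Real.rpow_pos_of_pos (by norm_num) _
    rw [hC]; linarith
  have hS_ev : ∀ᶠ t in atTop, dist ((∑ i ∈ Finset.range n,
      g (z (i + 1)) * (F (z (i + 1) * t) - F (z i * t))) / (1 - F t)) L < ε' / 4 :=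
    Metric.tendsto_nhds.mp hS (ε' / 4) (by linarith)
  filter_upwards [eventually_ge_atTop (1:ℝ), hratio_ev, hS_ev] with t ht h1 h2
  have ht0 : (0:ℝ) < t := by linarith
  have hBt : 0 < 1 - F t := hB t
  have hFd : 0 ≤ F (t / 2) - F (δ * t) :=
    sub_nonneg.mpr (F.mono (by nlinarith))
  set It := ∫ x in Ioc (δ * t) (t / 2), g (x / t) ∂F.measure with hIt
  set St := ∑ i ∈ Finset.range n, g (z (i + 1)) * (F (z (i + 1) * t) - F (z i * t)) with hSt
  rw [Real.dist_eq]
  have htri : |It / (1 - F t) - T|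
      ≤ |It / (1 - F t) - St / (1 - F t)| + |St / (1 - F t) - L| + |L - T| := by
    calc |It / (1 - F t) - T|
        = |(It / (1 - F t) - St / (1 - F t)) + (St / (1 - F t) - L) + (L - T)| := by congr 1; ring
      _ ≤ |It / (1 - F t) - St / (1 - F t) + (St / (1 - F t) - L)| + |L - T| := abs_add_le _ _
      _ ≤ |It / (1 - F t) - St / (1 - F t)| + |St / (1 - F t) - L| + |L - T| := by
          exact add_le_add (abs_add_le _ _) le_rfl
  have hIS : |It / (1 - F t) - St / (1 - F t)| ≤ ε * (C + 1) := by
    rw [div_sub_div_same, abs_div, abs_of_pos hBt]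
    rw [div_le_iff₀ hBt]
    calc |It - St| ≤ ε * (F (t / 2) - F (δ * t)) := hstep1 t ht
      _ = ε * ((F (t / 2) - F (δ * t)) / (1 - F t)) * (1 - F t) := by
          field_simp
      _ ≤ ε * (C + 1) * (1 - F t) := by
          refine mul_le_mul_of_nonneg_right ?_ hBt.le
          exact mul_le_mul_of_nonneg_left (le_of_lt h1) hεpos.le
  have hSL : |St / (1 - F t) - L| < ε' / 4 := by rwa [Real.dist_eq] at h2
  calc |It / (1 - F t) - T|
      ≤ |It / (1 - F t) - St / (1 - F t)| + |St / (1 - F t) - L| + |L - T| := htri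
    _ < ε * (C + 1) + ε' / 4 + ε * C := by
        have h3 := hIS; have h4 := hSL; have h5 := hLT
        linarith
    _ = ε * (2 * C + 1) + ε' / 4 := by ring
    _ = ε' / 4 + ε' / 4 := by rw [hεe]
    _ < ε' := by linarith
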